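/- A subset A of Cantor space 2^ω has (product) measure zero if and only if there exists a function f : ω → ω such that A ⊆ ⋂_m ⋃_{n>m} C^n_{f(n)}, where {C^n_m : n,m ∈ ω} is a fixed enumeration such that for each n, {C^n_m : m ∈ ω} lists all clopen sets of measure 2^{-n}. -/

import Mathlib

open MeasureTheory
open scoped ENNReal

namespace NullCantorAux

open Set Filter

abbrev Ω := ℕ → Bool

/-- The basic cylinder determined by the first `n` values of `σ`. -/
def cyl (n : ℕ) (σ : Ω) : Set Ω := {x | ∀ i < n, x i = σ i}

lemma mem_cyl_self (n : ℕ) (σ : Ω) : σ ∈ cyl n σ := fun _ _ => rfl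

lemma isClopen_cyl (n : ℕ) (σ : Ω) : IsClopen (cyl n σ) := by
  have : cyl n σ = ⋂ i ∈ Finset.range n, (fun x : Ω => x i) ⁻¹' {σ i} := by
    ext x; simp [cyl]
  rw [this]
  exact isClopen_biInter_finset fun i _ =>
    (isClopen_discrete {σ i}).preimage (continuous_apply i)

lemma measurableSet_cyl (n : ℕ) (σ : Ω) : MeasurableSet (cyl n σ) :=
  (isClopen_cyl n σ).isOpen.measurableSet

lemma cyl_congr {n : ℕ} {σ τ : Ω} (h : ∀ i < n, σ i = τ i) : cyl n σ = cyl n τ := by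
  ext x
  constructor <;> intro hx i hi
  · rw [hx i hi, h i hi]
  · rw [hx i hi, h i hi]

lemma measure_cyl (μ : Measure Ω)
    (hμ : ∀ (s : Finset ℕ) (σ : Ω), μ {x | ∀ i ∈ s, x i = σ i} = (2 : ℝ≥0∞)⁻¹ ^ s.card)
    (n : ℕ) (σ : Ω) : μ (cyl n σ) = (2 : ℝ≥0∞)⁻¹ ^ n := by
  have : cyl n σ = {x | ∀ i ∈ Finset.range n, x i = σ i} := by
    ext x; simp [cyl]
  rw [this, hμ, Finset.card_range]

/-- Every neighborhood of `x` contains a basic cylinder around `x`. -/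
lemma exists_cyl_subset {s : Set Ω} {x : Ω} (hs : s ∈ nhds x) : ∃ n, cyl n x ⊆ s := by
  rw [nhds_pi, Filter.mem_pi] at hs
  obtain ⟨I, hI, t, ht, hsub⟩ := hs
  obtain ⟨F, hF⟩ := hI.bddAbove
  refine ⟨F + 1, fun y hy => hsub fun i hi => ?_⟩
  have : y i = x i := hy i (Nat.lt_succ_of_le (hF hi))
  rw [this]
  exact mem_of_mem_nhds (ht i)

/-- Clopen sets are determined by finitely many coordinates. -/
lemma clopen_determined {D : Set Ω} (hD : IsClopen D) :
    ∃ N, ∀ x y : Ω, (∀ i < N, x i = y i) → x ∈ D → y ∈ D := by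
  have hcpt : IsCompact D := hD.isClosed.isCompact
  have hx : ∀ x : D, ∃ n, cyl n (x : Ω) ⊆ D := fun x =>
    exists_cyl_subset (hD.isOpen.mem_nhds x.2)
  choose n hn using hx
  have hcover : D ⊆ ⋃ x : D, cyl (n x) (x : Ω) := fun x hx =>
    Set.mem_iUnion.2 ⟨⟨x, hx⟩, fun i _ => rfl⟩
  obtain ⟨t, ht⟩ := hcpt.elim_finite_subcover (fun x : D => cyl (n x) (x : Ω))
    (fun x => (isClopen_cyl _ _).isOpen) hcover
  refine ⟨t.sup n, fun x y hxy hxD => ?_⟩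
  obtain ⟨z, hz, hxz⟩ := Set.mem_iUnion₂.1 (ht hxD)
  refine hn z fun i hi => ?_
  rw [← hxy i (lt_of_lt_of_le hi (Finset.le_sup hz)), hxz i hi]

/-- restriction map -/
def res (N : ℕ) (x : Ω) : Fin N → Bool := fun i => x i

/-- extension map -/
def ext (N : ℕ) (σ : Fin N → Bool) : Ω := fun i => if h : i < N then σ ⟨i, h⟩ else false

lemma continuous_res (N : ℕ) : Continuous (res N) :=
  continuous_pi fun i => continuous_apply (i : ℕ)

lemma res_preimage_singleton (N : ℕ) (σ : Fin N → Bool) :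
    res N ⁻¹' {σ} = cyl N (ext N σ) := by
  ext x
  simp only [Set.mem_preimage, Set.mem_singleton_iff, cyl, Set.mem_setOf_eq, funext_iff]
  constructor
  · intro h i hi
    simp [ext, hi, ← h ⟨i, hi⟩, res]
  · intro h i
    have := h i i.2
    simp [ext, i.2, res] at this ⊢
    rw [this]

lemma measure_res_preimage (μ : Measure Ω)
    (hμ : ∀ (s : Finset ℕ) (σ : Ω), μ {x | ∀ i ∈ s, x i = σ i} = (2 : ℝ≥0∞)⁻¹ ^ s.card)
    (N : ℕ) (S : Finset (Fin N → Bool)) :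
    μ (res N ⁻¹' (S : Set (Fin N → Bool))) = S.card * (2 : ℝ≥0∞)⁻¹ ^ N := by
  have hdecomp : res N ⁻¹' (S : Set (Fin N → Bool)) = ⋃ σ ∈ S, res N ⁻¹' {σ} := by
    ext x; simp
  rw [hdecomp, measure_biUnion_finset]
  · rw [Finset.sum_congr rfl (fun σ _ => ?_), Finset.sum_const, nsmul_eq_mul]
    rw [res_preimage_singleton, measure_cyl μ hμ]
  · intro σ _ τ _ hστ
    simp only [Function.onFun]
    refine Set.disjoint_left.2 fun x hx hx' => hστ ?_
    simp only [Set.mem_preimage, Set.mem_singleton_iff] at hx hx'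
    rw [← hx, ← hx']
  · intro σ _
    rw [res_preimage_singleton]
    exact measurableSet_cyl _ _

/-- Enlargement: a clopen set of measure at most `2⁻¹ ^ n` is contained in a clopen set of
measure exactly `2⁻¹ ^ n`. -/
lemma exists_clopen_superset (μ : Measure Ω)
    (hμ : ∀ (s : Finset ℕ) (σ : Ω), μ {x | ∀ i ∈ s, x i = σ i} = (2 : ℝ≥0∞)⁻¹ ^ s.card)
    {D : Set Ω} (hD : IsClopen D) {n : ℕ} (hle : μ D ≤ (2 : ℝ≥0∞)⁻¹ ^ n) :
    ∃ E, IsClopen E ∧ D ⊆ E ∧ μ E = (2 : ℝ≥0∞)⁻¹ ^ n := by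
  obtain ⟨N₀, hN₀⟩ := clopen_determined hD
  set N := max N₀ n with hNdef
  have hnN : n ≤ N := le_max_right _ _
  have hdet : ∀ x y : Ω, (∀ i < N, x i = y i) → x ∈ D → y ∈ D :=
    fun x y h => hN₀ x y fun i hi => h i (lt_of_lt_of_le hi (le_max_left _ _))
  classical
  set S : Finset (Fin N → Bool) := Finset.univ.filter (fun σ => ext N σ ∈ D) with hS
  have hagree : ∀ x : Ω, ∀ i < N, x i = ext N (res N x) i := by
    intro x i hi; simp [ext, res, hi]
  have hDeq : D = res N ⁻¹' (S : Set (Fin N → Bool)) := by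
    ext x
    simp only [Set.mem_preimage, hS, Finset.coe_filter, Set.mem_setOf_eq,
      Finset.mem_univ, true_and]
    constructor
    · intro hx
      exact hdet x (ext N (res N x)) (hagree x) hx
    · intro hx
      exact hdet (ext N (res N x)) x (fun i hi => (hagree x i hi).symm) hx
  have hmuD : μ D = S.card * (2 : ℝ≥0∞)⁻¹ ^ N := by
    rw [hDeq, measure_res_preimage μ hμ]
  have hpowne : (2 : ℝ≥0∞)⁻¹ ^ N ≠ 0 := by
    simp [pow_ne_zero_iff]
  have hpownetop : (2 : ℝ≥0∞)⁻¹ ^ N ≠ ⊤ := by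
    exact ENNReal.pow_ne_top (by simp)
  have key : ((2 ^ (N - n) : ℕ) : ℝ≥0∞) * (2 : ℝ≥0∞)⁻¹ ^ N = (2 : ℝ≥0∞)⁻¹ ^ n := by
    have h1 : (2 : ℝ≥0∞)⁻¹ ^ N = (2 : ℝ≥0∞)⁻¹ ^ (N - n) * (2 : ℝ≥0∞)⁻¹ ^ n := by
      rw [← pow_add, Nat.sub_add_cancel hnN]
    rw [h1, ← mul_assoc]
    push_cast
    rw [← mul_pow]
    norm_num [ENNReal.mul_inv_cancel]
  have hcardle : S.card ≤ 2 ^ (N - n) := by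
    have h2 : (S.card : ℝ≥0∞) * (2 : ℝ≥0∞)⁻¹ ^ N ≤
        ((2 ^ (N - n) : ℕ) : ℝ≥0∞) * (2 : ℝ≥0∞)⁻¹ ^ N := by
      rw [key, ← hmuD]; exact hle
    have := (ENNReal.mul_le_mul_iff_left hpowne hpownetop).1 h2
    exact_mod_cast this
  have hcardle2 : 2 ^ (N - n) ≤ Fintype.card (Fin N → Bool) := by
    simp only [Fintype.card_fun, Fintype.card_fin, Fintype.card_bool]
    exact Nat.pow_le_pow_right (by norm_num) (Nat.sub_le _ _)
  obtain ⟨T, hST, hTcard⟩ := Finset.exists_superset_card_eq hcardle hcardle2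
  refine ⟨res N ⁻¹' (T : Set (Fin N → Bool)), ?_, ?_, ?_⟩
  · exact (isClopen_discrete _).preimage (continuous_res N)
  · rw [hDeq]
    exact Set.preimage_mono (by exact_mod_cast hST)
  · rw [measure_res_preimage μ hμ, hTcard, key]

lemma isClopen_partialSups {V : ℕ → Set Ω} (h : ∀ k, IsClopen (V k)) (k : ℕ) :
    IsClopen (partialSups V k) := by
  induction k with
  | zero => rw [partialSups_zero]; exact h 0
  | succ k ih =>
    rw [← Order.succ_eq_add_one, partialSups_succ]
    exact ih.union (h (k + 1))

lemma isClopen_disjointed {V : ℕ → Set Ω} (h : ∀ k, IsClopen (V k)) (k : ℕ) :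
    IsClopen (disjointed V k) := by
  cases k with
  | zero => rw [disjointed_zero]; exact h 0
  | succ k =>
    rw [← Order.succ_eq_add_one, disjointed_succ _ (not_isMax k)]
    exact (h (k + 1)).diff (isClopen_partialSups h k)

/-- A null set is covered by countably many clopen sets of small total measure. -/
lemma exists_clopen_cover (μ : Measure Ω)
    (hμ : ∀ (s : Finset ℕ) (σ : Ω), μ {x | ∀ i ∈ s, x i = σ i} = (2 : ℝ≥0∞)⁻¹ ^ s.card)
    {A : Set Ω} (hA : μ A = 0) {ε : ℝ≥0∞} (hε : 0 < ε) :
    ∃ D : ℕ → Set Ω, (∀ k, IsClopen (D k)) ∧ A ⊆ ⋃ k, D k ∧ ∑' k, μ (D k) ≤ ε := by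
  classical
  haveI : IsFiniteMeasure μ := by
    constructor
    have h := hμ ∅ (fun _ => false)
    have huniv : {x : Ω | ∀ i ∈ (∅ : Finset ℕ), x i = false} = Set.univ := by
      ext x; simp
    rw [huniv] at h
    rw [h]
    simp
  obtain ⟨U, hAU, hUopen, hUlt⟩ := Set.exists_isOpen_lt_of_lt A ε (by rw [hA]; exact hε)
  -- decompose `U` into countably many cylinders
  have : Nonempty (Σ n : ℕ, Fin n → Bool) := ⟨⟨0, fun i => i.elim0⟩⟩
  obtain ⟨g, hg⟩ := exists_surjective_nat (Σ n : ℕ, Fin n → Bool)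
  set cylOf : (Σ n : ℕ, Fin n → Bool) → Set Ω := fun p => cyl p.1 (ext p.1 p.2) with hcylOf
  set V : ℕ → Set Ω := fun k => if cylOf (g k) ⊆ U then cylOf (g k) else ∅ with hV
  have hVclopen : ∀ k, IsClopen (V k) := by
    intro k
    by_cases h : cylOf (g k) ⊆ U <;> simp [hV, h] <;> simp [hcylOf, isClopen_cyl, isClopen_empty]
  have hVU : ⋃ k, V k = U := by
    apply Set.Subset.antisymm
    · refine Set.iUnion_subset fun k => ?_
      by_cases h : cylOf (g k) ⊆ U <;> simp [hV, h]
    · intro x hx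
      obtain ⟨n, hn⟩ := exists_cyl_subset (hUopen.mem_nhds hx)
      obtain ⟨k, hk⟩ := hg ⟨n, res n x⟩
      have hcyleq : cylOf ⟨n, res n x⟩ = cyl n x := by
        refine cyl_congr fun i hi => ?_
        simp [ext, res, hi]
      refine Set.mem_iUnion.2 ⟨k, ?_⟩
      rw [hV]
      simp only [hk, hcyleq, if_pos hn]
      exact fun i _ => rfl
  refine ⟨disjointed V, isClopen_disjointed hVclopen, ?_, ?_⟩
  · rw [iUnion_disjointed, hVU]; exact hAU
  · rw [← measure_iUnion (disjoint_disjointed V)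
      (fun k => (isClopen_disjointed hVclopen k).isOpen.measurableSet),
      iUnion_disjointed, hVU]
    exact hUlt.le

end NullCantorAux

open NullCantorAux

theorem null_iff_subset_interUnion_clopen
    (μ : Measure (ℕ → Bool))
    (hμ : ∀ (s : Finset ℕ) (σ : ℕ → Bool),
      μ {x | ∀ i ∈ s, x i = σ i} = (2 : ℝ≥0∞)⁻¹ ^ s.card)
    (C : ℕ → ℕ → Set (ℕ → Bool))
    (hclopen : ∀ n m, IsClopen (C n m))
    (hmeas : ∀ n m, μ (C n m) = (2 : ℝ≥0∞)⁻¹ ^ n)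
    (hsurj : ∀ (n : ℕ) (D : Set (ℕ → Bool)), IsClopen D → μ D = (2 : ℝ≥0∞)⁻¹ ^ n →
      ∃ m, C n m = D)
    (A : Set (ℕ → Bool)) :
    μ A = 0 ↔ ∃ f : ℕ → ℕ, A ⊆ ⋂ m : ℕ, ⋃ n : ℕ, ⋃ _ : m < n, C n (f n) := by
  classical
  constructor
  · intro hA
    have hcov : ∀ m : ℕ, ∃ D : ℕ → Set Ω, (∀ k, IsClopen (D k)) ∧ A ⊆ ⋃ k, D k ∧
        ∑' k, μ (D k) ≤ (2 : ℝ≥0∞)⁻¹ ^ (m + 1) := fun m =>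
      exists_clopen_cover μ hμ hA (ENNReal.pow_pos (ENNReal.inv_pos.2 (by norm_num)) _)
    choose Dfam hDclopen hDcover hDsum using hcov
    set e : ℕ ≃ ℕ × ℕ := (Denumerable.eqv (ℕ × ℕ)).symm with he
    set D : ℕ → Set Ω := fun i => Dfam (e i).1 (e i).2 with hD
    have hDclopen' : ∀ i, IsClopen (D i) := fun i => hDclopen _ _
    have htot : ∑' i, μ (D i) ≠ ⊤ := by
      have h1 : ∑' i, μ (D i) = ∑' p : ℕ × ℕ, μ (Dfam p.1 p.2) :=
        e.tsum_eq (fun p : ℕ × ℕ => μ (Dfam p.1 p.2))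
      rw [h1, ENNReal.tsum_prod (f := fun a b => μ (Dfam a b))]
      have h2 : ∑' m, ∑' k, μ (Dfam m k) ≤ ∑' m : ℕ, (2 : ℝ≥0∞)⁻¹ ^ m := by
        refine ENNReal.tsum_le_tsum fun m => le_trans (hDsum m) ?_
        exact pow_le_pow_of_le_one zero_le (by simp) (Nat.le_succ m)
      refine ne_top_of_le_ne_top ?_ h2
      rw [ENNReal.tsum_geometric]
      simp [ENNReal.one_sub_inv_two]
    have hinf : ∀ x ∈ A, ∀ b : ℕ, ∃ i, b < i ∧ x ∈ D i := by
      intro x hx b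
      have hxk : ∀ m, ∃ k, x ∈ Dfam m k := fun m => Set.mem_iUnion.1 (hDcover m hx)
      choose kk hkk using hxk
      have hinj : Function.Injective (fun m => e.symm (m, kk m)) := by
        intro m m' h
        have h2 := e.symm.injective h
        exact (Prod.ext_iff.1 h2).1
      have hI : {i : ℕ | x ∈ D i}.Infinite :=
        Set.infinite_of_injective_forall_mem hinj (fun m => by
          simp only [Set.mem_setOf_eq, hD]
          rw [e.apply_symm_apply]
          exact hkk m)
      obtain ⟨i, hiI, hbi⟩ := hI.exists_gt b
      exact ⟨i, hbi, hiI⟩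
    have htail := ENNReal.tendsto_sum_nat_add (fun i => μ (D i)) htot
    have hNex : ∀ j : ℕ, ∃ N, ∀ i ≥ N, ∑' k, μ (D (k + i)) ≤ (2 : ℝ≥0∞)⁻¹ ^ j := by
      intro j
      have hpos : (0 : ℝ≥0∞) < 2⁻¹ ^ j := ENNReal.pow_pos (ENNReal.inv_pos.2 (by norm_num)) _
      obtain ⟨N, hN⟩ := Filter.eventually_atTop.1 (htail.eventually (gt_mem_nhds hpos))
      exact ⟨N, fun i hi => (hN i hi).le⟩
    choose N hNspec using hNex
    set a : ℕ → ℕ := fun j => Nat.rec (N 0) (fun j aj => max (N (j + 1)) (aj + 1)) j with ha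
    have hasucc : ∀ j, a (j + 1) = max (N (j + 1)) (a j + 1) := fun j => rfl
    have hamono : StrictMono a := strictMono_nat_of_lt_succ fun j => by
      rw [hasucc]
      exact lt_of_lt_of_le (Nat.lt_succ_self _) (le_max_right _ _)
    have haN : ∀ j, N j ≤ a j := by
      intro j
      cases j with
      | zero => exact le_refl _
      | succ j => rw [hasucc]; exact le_max_left _ _
    have htail2 : ∀ j, ∑' k, μ (D (k + a j)) ≤ (2 : ℝ≥0∞)⁻¹ ^ j := fun j =>
      hNspec j (a j) (haN j)
    set E : ℕ → Set Ω := fun j => ⋃ i ∈ Finset.Ico (a j) (a (j + 1)), D i with hE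
    have hEclopen : ∀ j, IsClopen (E j) := fun j =>
      Set.Finite.isClopen_biUnion (Finset.finite_toSet _) fun i _ => hDclopen' i
    have hEmeas : ∀ j, μ (E j) ≤ (2 : ℝ≥0∞)⁻¹ ^ j := by
      intro j
      refine le_trans (measure_biUnion_finset_le _ _) (le_trans ?_ (htail2 j))
      rw [Finset.sum_Ico_eq_sum_range]
      simp_rw [Nat.add_comm (a j)]
      exact ENNReal.sum_le_tsum _
    have hEsub : ∀ j, ∃ mj, E j ⊆ C j mj := by
      intro j
      obtain ⟨F, hFclopen, hEF, hFmeas⟩ := exists_clopen_superset μ hμ (hEclopen j) (hEmeas j)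
      obtain ⟨mj, hmj⟩ := hsurj j F hFclopen hFmeas
      exact ⟨mj, hmj ▸ hEF⟩
    choose f hf using hEsub
    refine ⟨f, fun x hx => Set.mem_iInter.2 fun m => ?_⟩
    obtain ⟨i, hbi, hxi⟩ := hinf x hx (a (m + 1))
    have hPm : a (m + 1) ≤ i := hbi.le
    have hm1i : m + 1 ≤ i := le_trans hamono.le_apply hbi.le
    set j := Nat.findGreatest (fun j => a j ≤ i) i with hj
    have hPj : a j ≤ i := Nat.findGreatest_spec (P := fun j => a j ≤ i) hm1i hPm
    have hmj : m + 1 ≤ j := Nat.le_findGreatest (P := fun j => a j ≤ i) hm1i hPm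
    have hja : i < a (j + 1) := by
      by_cases h : j + 1 ≤ i
      · by_contra hcon
        exact Nat.findGreatest_is_greatest (Nat.lt_succ_self j) h (not_lt.1 hcon)
      · push_neg at h
        exact lt_of_lt_of_le h hamono.le_apply
    have hxE : x ∈ E j := Set.mem_biUnion (Finset.mem_Ico.2 ⟨hPj, hja⟩) hxi
    exact Set.mem_iUnion.2 ⟨j, Set.mem_iUnion.2
      ⟨lt_of_lt_of_le (Nat.lt_succ_self m) hmj, hf j hxE⟩⟩
  · rintro ⟨f, hsub⟩
    have key : ∀ m : ℕ, μ A ≤ (2 : ℝ≥0∞)⁻¹ ^ m := by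
      intro m
      have h1 : A ⊆ ⋃ k : ℕ, C (k + m + 1) (f (k + m + 1)) := by
        intro x hx
        have h2 := Set.mem_iInter.1 (hsub hx) m
        simp only [Set.mem_iUnion] at h2
        obtain ⟨n, hmn, hn⟩ := h2
        exact Set.mem_iUnion.2 ⟨n - m - 1, by rwa [show n - m - 1 + m + 1 = n by omega]⟩
      calc μ A ≤ ∑' k : ℕ, μ (C (k + m + 1) (f (k + m + 1))) :=
            le_trans (measure_mono h1) (measure_iUnion_le _)
        _ = ∑' k : ℕ, (2 : ℝ≥0∞)⁻¹ ^ (k + m + 1) := by simp_rw [hmeas]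
        _ = (2 : ℝ≥0∞)⁻¹ ^ m := by
            simp_rw [pow_succ, pow_add]
            rw [ENNReal.tsum_mul_right, ENNReal.tsum_mul_right, ENNReal.tsum_geometric]
            rw [ENNReal.one_sub_inv_two, inv_inv, mul_right_comm, mul_comm (2 : ℝ≥0∞),
              ENNReal.inv_mul_cancel (by norm_num) (by norm_num), one_mul]
    by_contra h
    obtain ⟨m, hm⟩ := ENNReal.exists_inv_two_pow_lt h
    exact absurd (key m) (not_le.2 hm)
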